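/- Let X be a nondegenerate chainable continuum. Then T_{X²}(Δ_X) = Δ_X if and only if X is an arc (i.e., X is homeomorphic to [0,1]). -/

import Mathlib

open Set Metric

set_option linter.unusedSectionVars false
set_option maxHeartbeats 1000000

/-- A subcontinuum of a space `Z`: a nonempty compact connected subset. -/
def IsSubcontinuum {Z : Type*} [TopologicalSpace Z] (S : Set Z) : Prop :=
  IsCompact S ∧ IsConnected S

/-- `X` is chainable. -/
def IsChainable (X : Type*) [MetricSpace X] : Prop :=
  ∀ ε : ℝ, 0 < ε → ∃ n : ℕ, ∃ U : Fin (n + 1) → Set X,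
    (∀ j, IsOpen (U j)) ∧ (⋃ j, U j) = Set.univ ∧
    (∀ j, Metric.diam (U j) < ε) ∧
    ∀ j k, (U j ∩ U k).Nonempty ↔ |((j : ℕ) : ℤ) - ((k : ℕ) : ℤ)| ≤ 1

/-- Jones's set function `T`. -/
def jonesT {Z : Type*} [TopologicalSpace Z] (A : Set Z) : Set Z :=
  {x | ∃ W : Set Z, IsSubcontinuum W ∧ x ∈ interior W ∧ W ⊆ Aᶜ}ᶜ

namespace Stmt18Aux

variable {X : Type*} [MetricSpace X] [CompactSpace X] [ConnectedSpace X]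

/-- Two points of `X × X` are related if some subcontinuum of `X × X` missing the diagonal
contains both. -/
def Rel (p q : X × X) : Prop :=
  ∃ C : Set (X × X), IsCompact C ∧ IsPreconnected C ∧ (∀ r ∈ C, r.1 ≠ r.2) ∧ p ∈ C ∧ q ∈ C

/-- The key consequence of `T(Δ) = Δ`. -/
def TProp (X : Type*) [MetricSpace X] : Prop :=
  ∀ p : X × X, p.1 ≠ p.2 →
    ∃ W : Set (X × X), IsCompact W ∧ IsPreconnected W ∧ (∀ q ∈ W, q.1 ≠ q.2) ∧ p ∈ interior W

theorem Rel.ne₁ {p q : X × X} (h : Rel p q) : p.1 ≠ p.2 := by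
  obtain ⟨C, -, -, hd, hp, -⟩ := h; exact hd p hp

theorem Rel.ne₂ {p q : X × X} (h : Rel p q) : q.1 ≠ q.2 := by
  obtain ⟨C, -, -, hd, -, hq⟩ := h; exact hd q hq

theorem Rel.refl {p : X × X} (h : p.1 ≠ p.2) : Rel p p :=
  ⟨{p}, isCompact_singleton, isPreconnected_singleton, by simpa using h, rfl, rfl⟩

theorem Rel.symm {p q : X × X} (h : Rel p q) : Rel q p := by
  obtain ⟨C, h1, h2, h3, h4, h5⟩ := h; exact ⟨C, h1, h2, h3, h5, h4⟩

theorem Rel.trans {p q r : X × X} (h : Rel p q) (h' : Rel q r) : Rel p r := by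
  obtain ⟨C, h1, h2, h3, h4, h5⟩ := h
  obtain ⟨C', h1', h2', h3', h4', h5'⟩ := h'
  refine ⟨C ∪ C', h1.union h1', IsPreconnected.union q h5 h4' h2 h2', ?_, Or.inl h4, Or.inr h5'⟩
  rintro x (hx | hx); exacts [h3 x hx, h3' x hx]

theorem Rel.swap {p q : X × X} (h : Rel p q) : Rel p.swap q.swap := by
  obtain ⟨C, h1, h2, h3, h4, h5⟩ := h
  refine ⟨Prod.swap '' C, h1.image continuous_swap, h2.image _ continuous_swap.continuousOn,
    ?_, ⟨p, h4, rfl⟩, ⟨q, h5, rfl⟩⟩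
  rintro x ⟨r, hr, rfl⟩; exact (h3 r hr).symm

/-- Within a connected off-diagonal set, any two points are `Rel`-related (uses `TProp`). -/
theorem rel_of_isPreconnected (hT : TProp X) {S : Set (X × X)} (hS : IsPreconnected S)
    (hd : ∀ r ∈ S, r.1 ≠ r.2) {p q : X × X} (hp : p ∈ S) (hq : q ∈ S) : Rel p q := by
  have h' : ∀ r, r ∈ S → ∃ W : Set (X × X),
      IsCompact W ∧ IsPreconnected W ∧ (∀ s ∈ W, s.1 ≠ s.2) ∧ r ∈ interior W :=
    fun r hr => hT r (hd r hr)
  choose W hWc hWp hWd hWi using h'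
  haveI : PreconnectedSpace ↥S :=
    (isPreconnected_iff_preconnectedSpace (s := S)).mp hS
  set T : Set ↥S := {r | Rel p (r : X × X)} with hTdef
  have hrelW : ∀ (r : X × X) (hr : r ∈ S) (s : X × X), s ∈ W r hr → Rel r s := by
    intro r hr s hs
    exact ⟨W r hr, hWc r hr, hWp r hr, hWd r hr, interior_subset (hWi r hr), hs⟩
  have hTopen : IsOpen T := by
    rw [isOpen_iff_mem_nhds]
    rintro ⟨r, hr⟩ hrT
    have : Subtype.val ⁻¹' (interior (W r hr)) ∈ nhds (⟨r, hr⟩ : ↥S) := by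
      exact (continuous_subtype_val.isOpen_preimage _ isOpen_interior).mem_nhds (hWi r hr)
    refine Filter.mem_of_superset this ?_
    rintro ⟨s, hs⟩ hsW
    exact Rel.trans hrT (hrelW r hr s (interior_subset hsW))
  have hTclosed : IsOpen Tᶜ := by
    rw [isOpen_iff_mem_nhds]
    rintro ⟨r, hr⟩ hrT
    have : Subtype.val ⁻¹' (interior (W r hr)) ∈ nhds (⟨r, hr⟩ : ↥S) := by
      exact (continuous_subtype_val.isOpen_preimage _ isOpen_interior).mem_nhds (hWi r hr)
    refine Filter.mem_of_superset this ?_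
    rintro ⟨s, hs⟩ hsW hsT
    exact hrT (Rel.trans hsT ((hrelW r hr s (interior_subset hsW)).symm))
  have hcl : IsClopen T := ⟨⟨by simpa using hTclosed⟩, hTopen⟩
  rcases isClopen_iff.mp hcl with h0 | h1
  · exact absurd (show (⟨p, hp⟩ : ↥S) ∈ T from Rel.refl (hd p hp)) (by simp [h0])
  · have : (⟨q, hq⟩ : ↥S) ∈ T := by rw [h1]; trivial
    exact this

/-- Chain maps: continuous real functions crushing the space along a chain. -/
theorem exists_chainMap (hnd : ∃ x y : X, x ≠ y) (hch : IsChainable X) {ε : ℝ} (hε : 0 < ε) :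
    ∃ f : X → ℝ, Continuous f ∧ ∀ x y : X, |f x - f y| ≤ 1 → dist x y < ε := by
  classical
  obtain ⟨u₀, v₀, huv⟩ := hnd
  have hd0 : 0 < dist u₀ v₀ := dist_pos.mpr huv
  set ε₀ : ℝ := min (ε / 6) (dist u₀ v₀ / 2) with hε₀def
  have hε₀pos : 0 < ε₀ := lt_min (by linarith) (by linarith)
  obtain ⟨n, U, hopen, hcover, hdiam, hconn⟩ := hch ε₀ hε₀pos
  have hUne : ∀ j, (U j).Nonempty := by
    intro j
    have := (hconn j j).mpr (by simp)
    simpa using this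
  have hbnd : ∀ j, Bornology.IsBounded (U j) :=
    fun j => (isCompact_univ.isBounded).subset (Set.subset_univ _)
  have hUcne : ∀ j, ((U j)ᶜ).Nonempty := by
    intro j
    by_contra hc
    rw [Set.not_nonempty_iff_eq_empty, Set.compl_empty_iff] at hc
    have hb : dist u₀ v₀ ≤ Metric.diam (U j) :=
      Metric.dist_le_diam_of_mem (hbnd j) (by rw [hc]; trivial) (by rw [hc]; trivial)
    have h1 := hdiam j
    have h2 : ε₀ ≤ dist u₀ v₀ / 2 := min_le_right _ _
    linarith
  set φ : Fin (n+1) → X → ℝ := fun j x => infDist x (U j)ᶜ with hφdef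
  have hφcont : ∀ j, Continuous (φ j) := fun j => continuous_infDist_pt _
  have hφnonneg : ∀ j x, 0 ≤ φ j x := fun j x => infDist_nonneg
  have hφpos : ∀ j x, x ∈ U j → 0 < φ j x := by
    intro j x hx
    rw [← IsClosed.notMem_iff_infDist_pos (hopen j).isClosed_compl (hUcne j)]
    simpa using hx
  have hφmem : ∀ j x, 0 < φ j x → x ∈ U j := by
    intro j x h
    by_contra hx
    have h0 : φ j x = 0 := infDist_zero_of_mem (by simpa using hx)
    linarith
  set σ : X → ℝ := fun x => ∑ j, φ j x with hσdef
  have hσpos : ∀ x, 0 < σ x := by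
    intro x
    have hx : x ∈ ⋃ j, U j := by rw [hcover]; trivial
    obtain ⟨j, hj⟩ := Set.mem_iUnion.mp hx
    exact Finset.sum_pos' (fun i _ => hφnonneg i x) ⟨j, Finset.mem_univ j, hφpos j x hj⟩
  have hσcont : Continuous σ := continuous_finset_sum _ fun j _ => hφcont j
  set f : X → ℝ := fun x => (∑ j : Fin (n+1), ((j : ℕ) : ℝ) * φ j x) / σ x with hfdef
  have hfcont : Continuous f :=
    Continuous.div (continuous_finset_sum _ fun j _ => continuous_const.mul (hφcont j)) hσcont
      fun x => (hσpos x).ne'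
  have hkey : ∀ (x : X) (k : Fin (n+1)), x ∈ U k → |f x - ((k : ℕ) : ℝ)| ≤ 1 := by
    intro x k hk
    have hnum : f x - ((k : ℕ) : ℝ) = (∑ j : Fin (n+1), (((j : ℕ) : ℝ) - ((k : ℕ) : ℝ)) * φ j x) / σ x := by
      rw [hfdef]
      rw [eq_div_iff (hσpos x).ne', sub_mul, div_mul_cancel₀ _ (hσpos x).ne']
      rw [hσdef, Finset.mul_sum, ← Finset.sum_sub_distrib]
      congr 1
      ext j
      ring
    have hterm : ∀ j : Fin (n+1), |(((j : ℕ) : ℝ) - ((k : ℕ) : ℝ)) * φ j x| ≤ φ j x := by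
      intro j
      rw [abs_mul, abs_of_nonneg (hφnonneg j x)]
      rcases eq_or_lt_of_le (hφnonneg j x) with h0 | hpos
      · rw [← h0]; simp
      · have hxj : x ∈ U j := hφmem j x hpos
        have hint : (U j ∩ U k).Nonempty := ⟨x, hxj, hk⟩
        have hz := (hconn j k).mp hint
        have habs : |((j : ℕ) : ℝ) - ((k : ℕ) : ℝ)| ≤ 1 := by exact_mod_cast hz
        exact mul_le_of_le_one_left (hφnonneg j x) habs
    rw [hnum, abs_div, abs_of_pos (hσpos x), div_le_one (hσpos x)]
    refine (Finset.abs_sum_le_sum_abs _ _).trans ?_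
    exact Finset.sum_le_sum fun j _ => hterm j
  have hhop : ∀ (j k : Fin (n+1)), |((j : ℕ) : ℤ) - ((k : ℕ) : ℤ)| ≤ 1 →
      ∀ x ∈ U j, ∀ y ∈ U k, dist x y < 2 * ε₀ := by
    intro j k hjk x hx y hy
    obtain ⟨z, hzj, hzk⟩ := (hconn j k).mpr hjk
    have h1 : dist x z < ε₀ := lt_of_le_of_lt (Metric.dist_le_diam_of_mem (hbnd j) hx hzj) (hdiam j)
    have h2 : dist z y < ε₀ := lt_of_le_of_lt (Metric.dist_le_diam_of_mem (hbnd k) hzk hy) (hdiam k)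
    calc dist x y ≤ dist x z + dist z y := dist_triangle x z y
    _ < 2 * ε₀ := by linarith
  have haux : ∀ (a b : Fin (n+1)) (x y : X), x ∈ U a → y ∈ U b → (a : ℕ) ≤ (b : ℕ) →
      (b : ℕ) ≤ (a : ℕ) + 3 → dist x y < ε := by
    intro a b x y hxa hyb hab hb3
    have hbn : (b : ℕ) ≤ n := Nat.lt_succ_iff.mp b.isLt
    set m1 : Fin (n+1) := ⟨min ((a : ℕ) + 1) (b : ℕ),
      Nat.lt_succ_of_le (le_trans (min_le_right _ _) hbn)⟩ with hm1def
    set m2 : Fin (n+1) := ⟨min ((a : ℕ) + 2) (b : ℕ),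
      Nat.lt_succ_of_le (le_trans (min_le_right _ _) hbn)⟩ with hm2def
    obtain ⟨w1, hw1⟩ := hUne m1
    obtain ⟨w2, hw2⟩ := hUne m2
    have d1 : dist x w1 < 2 * ε₀ := by
      refine hhop a m1 ?_ x hxa w1 hw1
      rw [hm1def, abs_le]
      constructor <;> push_cast <;> omega
    have d2 : dist w1 w2 < 2 * ε₀ := by
      refine hhop m1 m2 ?_ w1 hw1 w2 hw2
      rw [hm1def, hm2def, abs_le]
      constructor <;> push_cast <;> omega
    have d3 : dist w2 y < 2 * ε₀ := by
      refine hhop m2 b ?_ w2 hw2 y hyb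
      rw [hm2def, abs_le]
      constructor <;> push_cast <;> omega
    have htri : dist x y ≤ dist x w1 + dist w1 w2 + dist w2 y := dist_triangle4 x w1 w2 y
    have hε₀le : ε₀ ≤ ε / 6 := min_le_left _ _
    linarith
  refine ⟨f, hfcont, ?_⟩
  intro x y hxy
  obtain ⟨jx, hjx⟩ := Set.mem_iUnion.mp (show x ∈ ⋃ j, U j by rw [hcover]; trivial)
  obtain ⟨jy, hjy⟩ := Set.mem_iUnion.mp (show y ∈ ⋃ j, U j by rw [hcover]; trivial)
  have h1 := hkey x jx hjx
  have h2 := hkey y jy hjy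
  have hjj : |((jx : ℕ) : ℝ) - ((jy : ℕ) : ℝ)| ≤ 3 := by
    have t1 := abs_sub_le ((jx : ℕ) : ℝ) (f x) (f y)
    have t2 := abs_sub_le ((jx : ℕ) : ℝ) (f y) ((jy : ℕ) : ℝ)
    rw [abs_sub_comm] at h1
    have t3 : |f y - ((jy : ℕ) : ℝ)| ≤ 1 := h2
    linarith
  rw [abs_le] at hjj
  obtain ⟨hl, hr⟩ := hjj
  have hli : ((jx : ℕ) : ℤ) - ((jy : ℕ) : ℤ) ≤ 3 := by exact_mod_cast hr
  have hri : -(3 : ℤ) ≤ ((jx : ℕ) : ℤ) - ((jy : ℕ) : ℤ) := by exact_mod_cast hl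
  rcases le_total ((jx : ℕ)) ((jy : ℕ)) with hle | hle
  · exact haux jx jy x y hjx hjy hle (by omega)
  · rw [dist_comm]
    exact haux jy jx y x hjy hjx hle (by omega)

/-- On a continuum missing the diagonal, the "chain side" is constant. -/
theorem rel_sign {p q : X × X} (h : Rel p q) :
    ∃ δ : ℝ, 0 < δ ∧ ∀ f : X → ℝ, Continuous f →
      (∀ x y : X, |f x - f y| ≤ 1 → dist x y < δ) →
      (1 < f p.1 - f p.2 ∧ 1 < f q.1 - f q.2) ∨
        (f p.1 - f p.2 < -1 ∧ f q.1 - f q.2 < -1) := by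
  obtain ⟨C, hCc, hCp, hCd, hpC, hqC⟩ := h
  have hne : C.Nonempty := ⟨p, hpC⟩
  have hdcont : Continuous fun r : X × X => dist r.1 r.2 :=
    Continuous.dist continuous_fst continuous_snd
  obtain ⟨r0, hr0C, hr0min⟩ := hCc.exists_isMinOn hne hdcont.continuousOn
  have hδpos : 0 < dist r0.1 r0.2 := dist_pos.mpr (hCd r0 hr0C)
  refine ⟨dist r0.1 r0.2, hδpos, ?_⟩
  intro f hf hprop
  have hbig : ∀ r ∈ C, 1 < |f r.1 - f r.2| := by
    intro r hr
    by_contra hle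
    push_neg at hle
    have hlt := hprop r.1 r.2 hle
    exact absurd hlt (not_lt.mpr (hr0min hr))
  set g : X × X → ℝ := fun r => f r.1 - f r.2 with hgdef
  have hgc : ContinuousOn g C :=
    ((hf.comp continuous_fst).sub (hf.comp continuous_snd)).continuousOn
  have himg : IsPreconnected (g '' C) := hCp.image g hgc
  have hmix : ∀ u v : X × X, u ∈ C → v ∈ C → 1 < g u → g v < -1 → False := by
    intro u v hu hv h1 h2
    have hoc : Set.OrdConnected (g '' C) := himg.ordConnected
    have h0 : (0 : ℝ) ∈ g '' C :=
      hoc.out ⟨v, hv, rfl⟩ ⟨u, hu, rfl⟩ ⟨by linarith, by linarith⟩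
    obtain ⟨r, hrC, hr0⟩ := h0
    have := hbig r hrC
    rw [show f r.1 - f r.2 = g r from rfl, hr0] at this
    norm_num at this
  rcases lt_abs.mp (hbig p hpC) with hp1 | hp1 <;> rcases lt_abs.mp (hbig q hqC) with hq1 | hq1
  · exact Or.inl ⟨hp1, hq1⟩
  · exact absurd (hmix p q hpC hqC hp1 (by show f q.1 - f q.2 < -1; linarith)) not_false
  · exact absurd (hmix q p hqC hpC hq1 (by show f p.1 - f p.2 < -1; linarith)) not_false
  · exact Or.inr ⟨by linarith, by linarith⟩

theorem exists_three (hnd' : ∃ x y : X, x ≠ y) : ∃ a b c : X, a ≠ b ∧ a ≠ c ∧ b ≠ c := by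
  obtain ⟨a, b, hab⟩ := hnd'
  by_contra hno
  push_neg at hno
  have hall : ∀ z : X, z = a ∨ z = b := by
    intro z
    by_contra hz
    push_neg at hz
    exact hab (hno z a b hz.1 hz.2)
  have : IsClopen ({a} : Set X) := by
    constructor
    · exact isClosed_singleton
    · have : ({a} : Set X) = {b}ᶜ := by
        ext z
        simp only [Set.mem_singleton_iff, Set.mem_compl_iff]
        constructor
        · rintro rfl; exact hab
        · intro hzb
          rcases hall z with h | h
          · exact h
          · exact absurd h hzb
      rw [this]
      exact isOpen_compl_singleton
  rcases isClopen_iff.mp this with h0 | h1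
  · simpa using congrArg (a ∈ ·) h0
  · have : b ∈ ({a} : Set X) := h1 ▸ Set.mem_univ b
    exact hab (Set.mem_singleton_iff.mp this).symm

variable (hnd : ∃ x y : X, x ≠ y) (hch : IsChainable X)

include hnd hch in
theorem rel_not_swap {x y : X} (h : Rel (x, y) (y, x)) : False := by
  obtain ⟨δ, hδ, hsign⟩ := rel_sign h
  obtain ⟨f, hf, hprop⟩ := exists_chainMap hnd hch hδ
  dsimp only at hsign
  rcases hsign f hf hprop with ⟨h1, h2⟩ | ⟨h1, h2⟩ <;> linarith

include hnd hch in
theorem rel_cycle {x y z : X} (h : Rel (x, y) (y, z)) (h' : Rel (y, z) (z, x)) : False := by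
  obtain ⟨δ1, hδ1, hs1⟩ := rel_sign h
  obtain ⟨δ2, hδ2, hs2⟩ := rel_sign h'
  obtain ⟨f, hf, hprop⟩ := exists_chainMap hnd hch (lt_min hδ1 hδ2)
  have p1 := hs1 f hf fun a b hab => (hprop a b hab).trans_le (min_le_left _ _)
  have p2 := hs2 f hf fun a b hab => (hprop a b hab).trans_le (min_le_right _ _)
  dsimp only at p1 p2
  rcases p1 with ⟨a1, a2⟩ | ⟨a1, a2⟩ <;> rcases p2 with ⟨b1, b2⟩ | ⟨b1, b2⟩ <;> linarith

include hnd hch in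
theorem rel_tri {a b c : X} (h1 : Rel (a, b) (a, c)) (h2 : Rel (b, a) (b, c))
    (h3 : Rel (c, a) (c, b)) : False := by
  obtain ⟨δ1, hδ1, hs1⟩ := rel_sign h1
  obtain ⟨δ2, hδ2, hs2⟩ := rel_sign h2
  obtain ⟨δ3, hδ3, hs3⟩ := rel_sign h3
  obtain ⟨f, hf, hprop⟩ := exists_chainMap hnd hch (lt_min hδ1 (lt_min hδ2 hδ3))
  have p1 := hs1 f hf fun u v huv => (hprop u v huv).trans_le (min_le_left _ _)
  have p2 := hs2 f hf fun u v huv =>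
    (hprop u v huv).trans_le ((min_le_right _ _).trans (min_le_left _ _))
  have p3 := hs3 f hf fun u v huv =>
    (hprop u v huv).trans_le ((min_le_right _ _).trans (min_le_right _ _))
  dsimp only at p1 p2 p3
  rcases p1 with ⟨a1, a2⟩ | ⟨a1, a2⟩ <;> rcases p2 with ⟨b1, b2⟩ | ⟨b1, b2⟩ <;>
    rcases p3 with ⟨c1, c2⟩ | ⟨c1, c2⟩ <;> linarith

/-- A separation of the complement of a point. -/
def Sep (x : X) (A B : Set X) : Prop :=
  IsOpen A ∧ IsOpen B ∧ A ∩ B = ∅ ∧ A ∪ B = {x}ᶜ ∧ A.Nonempty ∧ B.Nonempty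

theorem Sep.symm {x : X} {A B : Set X} (h : Sep x A B) : Sep x B A := by
  obtain ⟨h1, h2, h3, h4, h5, h6⟩ := h
  exact ⟨h2, h1, by rwa [Set.inter_comm], by rwa [Set.union_comm], h6, h5⟩

theorem Sep.notMem_left {x : X} {A B : Set X} (h : Sep x A B) : x ∉ A := fun hx =>
  (h.2.2.2.1 ▸ (Set.mem_union_left B hx) : x ∈ ({x}ᶜ : Set X)) rfl

theorem Sep.ne_of_mem_left {x : X} {A B : Set X} (h : Sep x A B) {a : X} (ha : a ∈ A) : a ≠ x := by
  intro rfl'; exact h.notMem_left (rfl' ▸ ha)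

theorem Sep.compl_left {x : X} {A B : Set X} (h : Sep x A B) : Aᶜ = B ∪ {x} := by
  obtain ⟨-, -, h3, h4, -, -⟩ := h
  ext y
  constructor
  · intro hy
    by_cases hxy : y = x
    · exact Or.inr hxy
    · have : y ∈ A ∪ B := h4 ▸ hxy
      rcases this with h | h
      · exact absurd h hy
      · exact Or.inl h
  · rintro (hy | rfl)
    · intro hA
      exact absurd (Set.mem_inter hA hy) (by rw [h3]; exact not_false)
    · intro hA
      have : y ∈ ({y}ᶜ : Set X) := h4 ▸ Set.mem_union_left _ hA
      exact this rfl

theorem sep_clopen_aux {x : X} {S u v : Set X} (hScl : IsClosed S) (hxS : x ∈ S)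
    (hu : IsOpen u) (hv : IsOpen v) (hcov : S ⊆ u ∪ v) (hxu : x ∈ u)
    (hop : ∀ y, y ∈ S → y ≠ x → IsOpen (S ∩ {y' | y' ∈ S ∧ y' ≠ x} : Set X) ∨ True) -- unused
    (hSveq : S ∩ v ⊆ {y | y ∈ S ∧ y ≠ x}) (hvopenin : IsOpen (S ∩ v))
    (hne : (S ∩ v).Nonempty) (htriv : S ∩ (u ∩ v) = ∅) : False := by
  have hxv : x ∉ v := fun hxv => by
    have : x ∈ S ∩ (u ∩ v) := ⟨hxS, hxu, hxv⟩
    simp [htriv] at this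
  have heq : S ∩ v = S \ u := by
    apply Set.Subset.antisymm
    · rintro y ⟨hyS, hyv⟩
      refine ⟨hyS, fun hyu => ?_⟩
      have : y ∈ S ∩ (u ∩ v) := ⟨hyS, hyu, hyv⟩
      simp [htriv] at this
    · rintro y ⟨hyS, hyu⟩
      rcases hcov hyS with h | h
      · exact absurd h hyu
      · exact ⟨hyS, h⟩
  have hclosed : IsClosed (S ∩ v) := heq ▸ hScl.sdiff hu
  rcases isClopen_iff.mp ⟨hclosed, hvopenin⟩ with h0 | h1
  · rw [h0] at hne; exact Set.not_nonempty_empty hne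
  · have : x ∈ S ∩ v := h1 ▸ Set.mem_univ x
    exact hxv this.2

theorem Sep.side_preconnected {x : X} {A B : Set X} (h : Sep x A B) :
    IsPreconnected (B ∪ {x}) := by
  have hBop : IsOpen B := h.2.1
  have hScl : IsClosed (B ∪ {x}) := by
    have : (B ∪ {x}) = Aᶜ := h.compl_left.symm
    rw [this]
    exact isClosed_compl_iff.mpr h.1
  have hxS : x ∈ B ∪ {x} := Or.inr rfl
  have hxB : x ∉ B := fun hxB => by
    have : x ∈ ({x}ᶜ : Set X) := h.2.2.2.1 ▸ Set.mem_union_right _ hxB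
    exact this rfl
  intro u v hu hv hcov hneu hnev
  by_contra hne
  have htriv : (B ∪ {x}) ∩ (u ∩ v) = ∅ := Set.not_nonempty_iff_eq_empty.mp hne
  have hSvopen : ∀ w, IsOpen w → x ∉ w → IsOpen ((B ∪ {x}) ∩ w) := by
    intro w hw hxw
    have : (B ∪ {x}) ∩ w = B ∩ w := by
      ext y
      constructor
      · rintro ⟨hy | rfl, hyw⟩
        · exact ⟨hy, hyw⟩
        · exact absurd hyw hxw
      · rintro ⟨hyB, hyw⟩
        exact ⟨Or.inl hyB, hyw⟩
    rw [this]
    exact hBop.inter hw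
  rcases hcov hxS with hxu | hxv
  · have hxv : x ∉ v := fun hxv => hne ⟨x, hxS, hxu, hxv⟩
    exact sep_clopen_aux hScl hxS hu hv hcov hxu (fun _ _ _ => Or.inr trivial)
      (fun y hy => ⟨hy.1, fun hyx => hxv (hyx ▸ hy.2)⟩) (hSvopen v hv hxv) hnev htriv
  · have hxu : x ∉ u := fun hxu => hne ⟨x, hxS, hxu, hxv⟩
    have htriv' : (B ∪ {x}) ∩ (v ∩ u) = ∅ := by rwa [Set.inter_comm v u]
    exact sep_clopen_aux hScl hxS hv hu (by rwa [Set.union_comm u v] at hcov) hxv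
      (fun _ _ _ => Or.inr trivial)
      (fun y hy => ⟨hy.1, fun hyx => hxu (hyx ▸ hy.2)⟩) (hSvopen u hu hxu) hneu htriv'

include hnd hch in
theorem sep3_false (hT : TProp X) {x : X} {A B C : Set X} (hA : IsOpen A) (hB : IsOpen B)
    (hC : IsOpen C) (hAB : A ∩ B = ∅) (hAC : A ∩ C = ∅) (hBC : B ∩ C = ∅)
    (hU : A ∪ B ∪ C = {x}ᶜ) (hAn : A.Nonempty) (hBn : B.Nonempty) (hCn : C.Nonempty) :
    False := by
  obtain ⟨a, ha⟩ := hAn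
  obtain ⟨b, hb⟩ := hBn
  obtain ⟨c, hc⟩ := hCn
  have hsub : ∀ y ∈ A ∪ B ∪ C, y ≠ x := by
    intro y hy
    have : y ∈ ({x}ᶜ : Set X) := hU ▸ hy
    exact this
  have disj : ∀ {u w : X} {U V : Set X}, U ∩ V = ∅ → u ∈ U → w ∈ V → u ≠ w := by
    intro u w U V hUV hu hw h
    subst h
    exact absurd (Set.mem_inter hu hw) (by rw [hUV]; exact not_false)
  -- the three separations
  have S1 : Sep x A (B ∪ C) := by
    refine ⟨hA, hB.union hC, ?_, by rw [← hU]; ac_rfl, ⟨a, ha⟩, ⟨b, Or.inl hb⟩⟩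
    rw [Set.inter_union_distrib_left, hAB, hAC, Set.union_empty]
  have S2 : Sep x B (A ∪ C) := by
    refine ⟨hB, hA.union hC, ?_, by rw [← hU]; ac_rfl, ⟨b, hb⟩, ⟨a, Or.inl ha⟩⟩
    rw [Set.inter_union_distrib_left, Set.inter_comm B A, hAB, hBC, Set.union_empty]
  have S3 : Sep x C (A ∪ B) := by
    refine ⟨hC, hA.union hB, ?_, by rw [← hU]; ac_rfl, ⟨c, hc⟩, ⟨a, Or.inl ha⟩⟩
    rw [Set.inter_union_distrib_left, Set.inter_comm C A, hAC, Set.inter_comm C B, hBC,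
      Set.union_empty]
  -- three Rel facts
  have mkRel : ∀ (z : X) (D E : Set X), Sep x D E → z ∈ D → ∀ w w' : X, w ∈ E ∪ {x} →
      w' ∈ E ∪ {x} → Rel (z, w) (z, w') := by
    intro z D E hS hz w w' hw hw'
    refine rel_of_isPreconnected hT (S := {z} ×ˢ (E ∪ {x}))
      (isPreconnected_singleton.prod hS.side_preconnected) ?_ ?_ ?_
    · rintro ⟨r1, r2⟩ ⟨hr1, hr2⟩
      simp only [Set.mem_singleton_iff] at hr1
      subst hr1
      rcases hr2 with hr2 | hx2
      · exact disj hS.2.2.1 hz hr2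
      · simp only [Set.mem_singleton_iff] at hx2
        subst hx2
        exact hS.ne_of_mem_left hz
    · exact ⟨rfl, hw⟩
    · exact ⟨rfl, hw'⟩
  have R1 : Rel (a, b) (a, c) :=
    mkRel a A (B ∪ C) S1 ha b c (Or.inl (Or.inl hb)) (Or.inl (Or.inr hc))
  have R2 : Rel (b, a) (b, c) :=
    mkRel b B (A ∪ C) S2 hb a c (Or.inl (Or.inl ha)) (Or.inl (Or.inr hc))
  have R3 : Rel (c, a) (c, b) :=
    mkRel c C (A ∪ B) S3 hc a b (Or.inl (Or.inl ha)) (Or.inl (Or.inr hb))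
  exact rel_tri hnd hch R1 R2 R3

include hnd hch in
theorem Sep.left_preconnected (hT : TProp X) {x : X} {A B : Set X} (h : Sep x A B) :
    IsPreconnected A := by
  by_contra hnc
  simp only [IsPreconnected, not_forall] at hnc
  obtain ⟨u, v, hu, hv, hcov, hneu, hnev, htriv⟩ := hnc
  have htriv' : A ∩ (u ∩ v) = ∅ := Set.not_nonempty_iff_eq_empty.mp htriv
  refine sep3_false hnd hch hT (x := x) (A := A ∩ u) (B := A ∩ v) (C := B)
    (h.1.inter hu) (h.1.inter hv) h.2.1 ?_ ?_ ?_ ?_ hneu hnev h.2.2.2.2.2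
  · rw [show A ∩ u ∩ (A ∩ v) = A ∩ (u ∩ v) by ext y; simp only [Set.mem_inter_iff]; tauto]
    exact htriv'
  · rw [show A ∩ u ∩ B = (A ∩ B) ∩ u by ext y; simp only [Set.mem_inter_iff]; tauto]
    rw [h.2.2.1, Set.empty_inter]
  · rw [show A ∩ v ∩ B = (A ∩ B) ∩ v by ext y; simp only [Set.mem_inter_iff]; tauto]
    rw [h.2.2.1, Set.empty_inter]
  · have : A ∩ u ∪ A ∩ v = A := by
      apply Set.Subset.antisymm
      · rintro y (⟨h1, -⟩ | ⟨h1, -⟩) <;> exact h1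
      · intro y hy
        rcases hcov hy with h' | h'
        · exact Or.inl ⟨hy, h'⟩
        · exact Or.inr ⟨hy, h'⟩
    rw [this, h.2.2.2.1]

theorem sep_of_not_preconnected {x : X} (h : ¬ IsPreconnected ({x}ᶜ : Set X)) :
    ∃ A B, Sep x A B := by
  simp only [IsPreconnected, not_forall] at h
  obtain ⟨u, v, hu, hv, hcov, hneu, hnev, htriv⟩ := h
  have htriv' : ({x}ᶜ : Set X) ∩ (u ∩ v) = ∅ := Set.not_nonempty_iff_eq_empty.mp htriv
  refine ⟨{x}ᶜ ∩ u, {x}ᶜ ∩ v, (isOpen_compl_singleton).inter hu,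
    (isOpen_compl_singleton).inter hv, ?_, ?_, hneu, hnev⟩
  · rw [show {x}ᶜ ∩ u ∩ ({x}ᶜ ∩ v) = {x}ᶜ ∩ (u ∩ v) by ext y; simp only [Set.mem_inter_iff]; tauto]
    exact htriv'
  · apply Set.Subset.antisymm
    · rintro y (⟨h1, -⟩ | ⟨h1, -⟩) <;> exact h1
    · intro y hy
      rcases hcov hy with h' | h'
      · exact Or.inl ⟨hy, h'⟩
      · exact Or.inr ⟨hy, h'⟩

include hnd hch in
include hnd hch in
theorem exists_cut (hT : TProp X) : ∃ (x : X) (A B : Set X), Sep x A B := by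
  by_contra hno
  push_neg at hno
  have hpc : ∀ x : X, IsPreconnected ({x}ᶜ : Set X) := by
    intro x
    by_contra h
    obtain ⟨A, B, hS⟩ := sep_of_not_preconnected h
    exact (hno x A B) hS
  obtain ⟨a, b, c, hab, hac, hbc⟩ := exists_three hnd
  have mkRel : ∀ z w w' : X, z ≠ w → z ≠ w' → Rel (z, w) (z, w') := by
    intro z w w' hzw hzw'
    refine rel_of_isPreconnected hT (S := {z} ×ˢ ({z}ᶜ : Set X))
      (isPreconnected_singleton.prod (hpc z)) ?_ ?_ ?_
    · rintro ⟨r1, r2⟩ ⟨hr1, hr2⟩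
      simp only [Set.mem_singleton_iff] at hr1
      subst hr1
      exact fun h => hr2 h.symm
    · exact ⟨rfl, Ne.symm hzw⟩
    · exact ⟨rfl, Ne.symm hzw'⟩
  exact rel_tri hnd hch (mkRel a b c hab hac) (mkRel b a c (Ne.symm hab) hbc)
    (mkRel c a b (Ne.symm hac) (Ne.symm hbc))

theorem Rel.swap' {a b c d : X} (h : Rel (a, b) (c, d)) : Rel (b, a) (d, c) := h.swap

/-- If `C` is preconnected and avoids `z`, all pairs `(z, w)`, `w ∈ C`, are related. -/
theorem relFix (hT : TProp X) (z : X) {C : Set X} (hC : IsPreconnected C)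
    (hzC : ∀ w ∈ C, w ≠ z) {w w' : X} (hw : w ∈ C) (hw' : w' ∈ C) :
    Rel (z, w) (z, w') := by
  refine rel_of_isPreconnected hT (S := {z} ×ˢ C) (isPreconnected_singleton.prod hC) ?_
    ⟨rfl, hw⟩ ⟨rfl, hw'⟩
  rintro ⟨r1, r2⟩ ⟨hr1, hr2⟩
  simp only [Set.mem_singleton_iff] at hr1
  subst hr1
  exact fun h => hzC r2 hr2 h.symm

theorem sep_mem_union {x : X} {A B : Set X} (h : Sep x A B) {y : X} (hy : y ≠ x) :
    y ∈ A ∪ B := h.2.2.2.1 ▸ (fun hxy => hy hxy : y ∈ ({x}ᶜ : Set X))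

theorem sep_disj {x : X} {A B : Set X} (h : Sep x A B) {a b : X} (ha : a ∈ A) (hb : b ∈ B) :
    a ≠ b := by
  intro h'
  subst h'
  exact absurd (Set.mem_inter ha hb) (by rw [h.2.2.1]; exact not_false)

theorem orderTopology_of_rays {Y : Type*} [MetricSpace Y] [cs : CompactSpace Y] [LinearOrder Y]
    (hIoi : ∀ u : Y, IsOpen (Set.Ioi u)) (hIio : ∀ u : Y, IsOpen (Set.Iio u)) :
    OrderTopology Y := by
  have hle : (UniformSpace.toTopologicalSpace : TopologicalSpace Y) ≤ Preorder.topology Y := by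
    refine le_generateFrom ?_
    rintro s ⟨a, rfl | rfl⟩
    · exact hIoi a
    · exact hIio a
  constructor
  refine le_antisymm hle ?_
  letI tO : TopologicalSpace Y := Preorder.topology Y
  haveI hOT : @OrderTopology Y tO _ := ⟨rfl⟩
  haveI hT2 : @T2Space Y tO := inferInstance
  have hcont : @Continuous Y Y UniformSpace.toTopologicalSpace tO id :=
    continuous_id_iff_le.mpr hle
  have hcont2 : @Continuous Y Y tO UniformSpace.toTopologicalSpace ⇑(Equiv.refl Y).symm :=
    @Continuous.continuous_symm_of_equiv_compact_to_t2 Y Y UniformSpace.toTopologicalSpace tO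
      cs hT2 (Equiv.refl Y) hcont
  rw [← continuous_id_iff_le]
  exact hcont2

include hnd hch in
theorem rel_total (hT : TProp X) {x₀ : X} {A₀ B₀ : Set X} (hS : Sep x₀ A₀ B₀) {b₀ : X}
    (hb₀ : b₀ ∈ B₀) :
    ∀ u v : X, u ≠ v → Rel (u, v) (x₀, b₀) ∨ Rel (v, u) (x₀, b₀) := by
  have hmemB : ∀ {z : X}, z ∈ A₀ → ∀ w ∈ B₀ ∪ {x₀}, w ≠ z := by
    intro z hz w hw
    rcases hw with hw | hw
    · exact (sep_disj hS hz hw).symm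
    · simp only [Set.mem_singleton_iff] at hw
      subst hw
      exact (hS.ne_of_mem_left hz).symm
  have hmemA : ∀ {z : X}, z ∈ B₀ → ∀ w ∈ A₀ ∪ {x₀}, w ≠ z := by
    intro z hz w hw
    rcases hw with hw | hw
    · exact sep_disj hS hw hz
    · simp only [Set.mem_singleton_iff] at hw
      subst hw
      exact (hS.symm.ne_of_mem_left hz).symm
  have KA : ∀ a ∈ A₀, Rel (a, x₀) (x₀, b₀) := by
    intro a ha
    have h1 : Rel (a, b₀) (a, x₀) :=
      relFix hT a hS.side_preconnected (hmemB ha) (Or.inl hb₀) (Or.inr rfl)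
    have h2 : Rel (b₀, a) (b₀, x₀) :=
      relFix hT b₀ hS.symm.side_preconnected (hmemA hb₀) (Or.inl ha) (Or.inr rfl)
    exact h1.symm.trans h2.swap'
  have KA' : ∀ a ∈ A₀, ∀ w ∈ B₀ ∪ {x₀}, Rel (a, w) (x₀, b₀) := by
    intro a ha w hw
    exact (relFix hT a hS.side_preconnected (hmemB ha) hw (Or.inr rfl)).trans (KA a ha)
  have KB : ∀ b ∈ B₀, Rel (x₀, b) (x₀, b₀) := by
    intro b hb
    refine relFix hT x₀ (hS.symm.left_preconnected hnd hch hT) ?_ hb hb₀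
    intro w hw
    exact hS.symm.ne_of_mem_left hw
  have resolve : ∀ u, u ≠ x₀ → Rel (u, x₀) (x₀, b₀) ∨ Rel (x₀, u) (x₀, b₀) := by
    intro u hu
    rcases sep_mem_union hS hu with h | h
    · exact Or.inl (KA u h)
    · exact Or.inr (KB u h)
  intro u v huv
  by_cases hux : u = x₀
  · subst hux
    rcases sep_mem_union hS (Ne.symm huv) with h | h
    · exact Or.inr (KA v h)
    · exact Or.inl (KB v h)
  by_cases hvx : v = x₀
  · subst hvx
    rcases resolve u hux with h | h
    · exact Or.inl h
    · exact Or.inr h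
  -- both u, v differ from x₀
  have hfinish : ∀ {C : Set X}, IsPreconnected C → (∀ w ∈ C, w ≠ u) → v ∈ C → x₀ ∈ C →
      Rel (u, v) (x₀, b₀) ∨ Rel (v, u) (x₀, b₀) := by
    intro C hC hCne hvC hxC
    have R : Rel (u, v) (u, x₀) := relFix hT u hC hCne hvC hxC
    rcases resolve u hux with h | h
    · exact Or.inl (R.trans h)
    · exact Or.inr ((R.trans h.swap').swap')
  by_cases hpre : IsPreconnected ({u}ᶜ : Set X)
  · exact hfinish hpre (fun w hw => hw) (Ne.symm huv) (fun h => hux h.symm)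
  obtain ⟨A', B', hSu⟩ := sep_of_not_preconnected hpre
  have hvAB := sep_mem_union hSu (Ne.symm huv)
  have hxAB := sep_mem_union hSu (fun h => hux h.symm)
  -- helper for the mixed case
  have hmixed : ∀ {A' B' : Set X}, Sep u A' B' → v ∈ A' → x₀ ∈ B' →
      Rel (u, v) (x₀, b₀) ∨ Rel (v, u) (x₀, b₀) := by
    intro A' B' hSu hvA hxB
    have Rv : Rel (v, x₀) (v, u) := by
      refine relFix hT v hSu.side_preconnected ?_ (Or.inl hxB) (Or.inr rfl)
      intro w hw
      rcases hw with hw | hw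
      · exact (sep_disj hSu hvA hw).symm
      · simp only [Set.mem_singleton_iff] at hw
        subst hw
        exact (hSu.ne_of_mem_left hvA).symm
    have Rx : Rel (x₀, v) (x₀, u) := by
      refine relFix hT x₀ hSu.symm.side_preconnected ?_ (Or.inl hvA) (Or.inr rfl)
      intro w hw
      rcases hw with hw | hw
      · exact sep_disj hSu hw hxB
      · simp only [Set.mem_singleton_iff] at hw
        subst hw
        exact fun h => hux h
    rcases resolve u hux with h | h
    · -- Rel (u,x₀) P₀
      have h1 : Rel (x₀, v) (b₀, x₀) := Rx.trans h.swap'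
      have h2 : Rel (v, x₀) (x₀, b₀) := h1.swap'
      exact Or.inr (Rv.symm.trans h2)
    · -- Rel (x₀,u) P₀
      have h1 : Rel (x₀, v) (x₀, b₀) := Rx.trans h
      have h2 : Rel (v, x₀) (b₀, x₀) := h1.swap'
      have h3 : Rel (v, u) (b₀, x₀) := Rv.symm.trans h2
      exact Or.inl h3.swap'
  rcases hvAB with hvA | hvB <;> rcases hxAB with hxA | hxB
  · exact hfinish (hSu.left_preconnected hnd hch hT)
      (fun w hw => hSu.ne_of_mem_left hw) hvA hxA
  · exact hmixed hSu hvA hxB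
  · exact hmixed hSu.symm hvB hxA
  · exact hfinish (hSu.symm.left_preconnected hnd hch hT)
      (fun w hw => hSu.symm.ne_of_mem_left hw) hvB hxB

include hnd hch in
theorem arc_of_T (hT : TProp X) : Nonempty (X ≃ₜ (Set.Icc (0 : ℝ) 1)) := by
  classical
  obtain ⟨x₀, A₀, B₀, hS⟩ := exists_cut hnd hch hT
  obtain ⟨b₀, hb₀⟩ := hS.2.2.2.2.2
  set lt : X → X → Prop := fun u v => Rel (u, v) (x₀, b₀) with hltdef
  have htotal := rel_total hnd hch hT hS hb₀
  have hirr : ∀ u, ¬ lt u u := fun u h => (Rel.ne₁ h) rfl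
  have hasym : ∀ u v, lt u v → lt v u → False := fun u v h1 h2 =>
    rel_not_swap hnd hch (h1.trans h2.symm)
  have htrans : ∀ u v w, lt u v → lt v w → lt u w := by
    intro u v w h1 h2
    have huw : u ≠ w := by
      rintro rfl
      exact hasym u v h1 h2
    rcases htotal u w huw with h | h
    · exact h
    · exact absurd (rel_cycle hnd hch (h1.trans h2.symm) (h2.trans h.symm)) not_false
  haveI hIr : IsIrrefl X lt := ⟨hirr⟩
  haveI hTr : IsTrans X lt := ⟨htrans⟩
  haveI hTc : IsTrichotomous X lt := ⟨fun u v => by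
    by_cases h : u = v
    · exact fun _ _ => h
    · rcases htotal u v h with h' | h'
      · exact fun h1 _ => absurd h' h1
      · exact fun _ h2 => absurd h' h2⟩
  haveI hSTO : IsStrictTotalOrder X lt := { }
  letI hdec : DecidableRel lt := fun _ _ => Classical.dec _
  letI lin : LinearOrder X := linearOrderOfSTO lt
  have hlt_iff : ∀ u v : X, u < v ↔ lt u v := fun u v => Iff.rfl
  -- rays are open in the metric topology
  have hIoi : ∀ u : X, IsOpen {v | lt u v} := by
    intro u
    rw [isOpen_iff_mem_nhds]
    intro v hv
    have hne : u ≠ v := Rel.ne₁ hv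
    obtain ⟨W, hWc, hWp, hWd, hWi⟩ := hT (u, v) hne
    obtain ⟨s, t, hs, ht, hus, hvt, hsub⟩ := isOpen_prod_iff.mp isOpen_interior u v hWi
    refine Filter.mem_of_superset (ht.mem_nhds hvt) ?_
    intro v' hv'
    have h1 : (u, v') ∈ W := interior_subset (hsub ⟨hus, hv'⟩)
    have h2 : (u, v) ∈ W := interior_subset (hsub ⟨hus, hvt⟩)
    exact Rel.trans ⟨W, hWc, hWp, hWd, h1, h2⟩ hv
  have hIio : ∀ u : X, IsOpen {v | lt v u} := by
    intro u
    rw [isOpen_iff_mem_nhds]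
    intro v hv
    have hne : v ≠ u := Rel.ne₁ hv
    obtain ⟨W, hWc, hWp, hWd, hWi⟩ := hT (v, u) hne
    obtain ⟨s, t, hs, ht, hvs, hut, hsub⟩ := isOpen_prod_iff.mp isOpen_interior v u hWi
    refine Filter.mem_of_superset (hs.mem_nhds hvs) ?_
    intro v' hv'
    have h1 : (v', u) ∈ W := interior_subset (hsub ⟨hv', hut⟩)
    have h2 : (v, u) ∈ W := interior_subset (hsub ⟨hvs, hut⟩)
    exact Rel.trans ⟨W, hWc, hWp, hWd, h1, h2⟩ hv
  -- the metric topology is the order topology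
  haveI hOTX : OrderTopology X := orderTopology_of_rays (fun u => hIoi u) (fun u => hIio u)
  -- X is densely ordered
  haveI hdense : DenselyOrdered X := by
    constructor
    intro a b hab
    by_contra hno
    push_neg at hno
    have hIic : Set.Iio b = Set.Iic a := by
      ext c
      simp only [Set.mem_Iio, Set.mem_Iic]
      constructor
      · intro hc
        by_contra hca
        exact absurd hc (not_lt.mpr (hno c (not_le.mp hca)))
      · intro hc
        exact lt_of_le_of_lt hc hab
    have hcl : IsClopen (Set.Iic a) := ⟨isClosed_Iic, hIic ▸ isOpen_Iio⟩
    rcases isClopen_iff.mp hcl with h0 | h1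
    · have : a ∈ Set.Iic a := Set.mem_Iic.mpr le_rfl
      rw [h0] at this
      exact this
    · have : b ∈ Set.Iic a := h1 ▸ Set.mem_univ b
      exact absurd hab (not_lt.mpr this)
  -- extremes
  haveI : Nonempty X := ⟨x₀⟩
  obtain ⟨m, hm⟩ := (isCompact_univ : IsCompact (Set.univ : Set X)).exists_isLeast Set.univ_nonempty
  obtain ⟨M, hM⟩ := (isCompact_univ : IsCompact (Set.univ : Set X)).exists_isGreatest Set.univ_nonempty
  have hmM : m < M := by
    obtain ⟨u, v, huv⟩ := hnd
    rcases lt_or_eq_of_le (hm.2 (Set.mem_univ M) : m ≤ M) with h | h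
    · exact h
    · exfalso
      apply huv
      have h1 : u ≤ M := hM.2 (Set.mem_univ u)
      have h2 : m ≤ u := hm.2 (Set.mem_univ u)
      have h3 : v ≤ M := hM.2 (Set.mem_univ v)
      have h4 : m ≤ v := hm.2 (Set.mem_univ v)
      rw [← h] at h1 h3
      exact (le_antisymm h1 h2).trans (le_antisymm h4 h3)
  -- countable dense set inside the open interval
  obtain ⟨D₀, hD₀c, hD₀d⟩ := TopologicalSpace.exists_countable_dense X
  set D : Set X := D₀ ∩ Set.Ioo m M with hDdef
  have hDc : D.Countable := hD₀c.mono Set.inter_subset_left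
  have hDdense : ∀ u v : X, u < v → ∃ d ∈ D, u < d ∧ d < v := by
    intro u v huv
    have hne : (Set.Ioo u v).Nonempty := exists_between huv
    obtain ⟨d, hd₀, hd⟩ := hD₀d.exists_mem_open isOpen_Ioo hne
    refine ⟨d, ⟨hd₀, ?_, ?_⟩, hd.1, hd.2⟩
    · exact lt_of_le_of_lt (hm.2 (Set.mem_univ u)) hd.1
    · exact hd.2.trans_le (hM.2 (Set.mem_univ v))
  haveI : Countable ↥D := hDc.to_subtype
  haveI : Nonempty ↥D := by
    obtain ⟨d, hd, -⟩ := hDdense m M hmM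
    exact ⟨⟨d, hd⟩⟩
  haveI : DenselyOrdered ↥D := by
    constructor
    rintro ⟨a, ha⟩ ⟨b, hb⟩ hab
    rw [Subtype.mk_lt_mk] at hab
    obtain ⟨d, hd, h1, h2⟩ := hDdense a b hab
    exact ⟨⟨d, hd⟩, Subtype.mk_lt_mk.mpr h1, Subtype.mk_lt_mk.mpr h2⟩
  haveI : NoMinOrder ↥D := by
    constructor
    rintro ⟨a, ha⟩
    obtain ⟨d, hd, h1, h2⟩ := hDdense m a ha.2.1
    exact ⟨⟨d, hd⟩, Subtype.mk_lt_mk.mpr h2⟩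
  haveI : NoMaxOrder ↥D := by
    constructor
    rintro ⟨a, ha⟩
    obtain ⟨d, hd, h1, h2⟩ := hDdense a M ha.2.2
    exact ⟨⟨d, hd⟩, Subtype.mk_lt_mk.mpr h1⟩
  obtain ⟨ψ⟩ := Order.iso_of_countable_dense (↥D) ℚ
  -- logistic function
  set L : ℝ → ℝ := fun r => 1 / (1 + Real.exp (-r)) with hLdef
  have hL01 : ∀ r, 0 < L r ∧ L r < 1 := by
    intro r
    have h1 : 0 < Real.exp (-r) := Real.exp_pos _
    constructor
    · rw [hLdef]; positivity
    · rw [hLdef]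
      rw [div_lt_one (by positivity)]
      linarith
  have hLmono : StrictMono L := by
    intro r s hrs
    have h1 : Real.exp (-s) < Real.exp (-r) := Real.exp_lt_exp.mpr (by linarith)
    have h2 : (0:ℝ) < 1 + Real.exp (-s) := by positivity
    have h3 : (0:ℝ) < 1 + Real.exp (-r) := by positivity
    rw [hLdef]
    dsimp only
    rw [div_lt_div_iff₀ h3 h2]
    linarith
  have hLsurj : ∀ t : ℝ, 0 < t → t < 1 → ∃ r, L r = t := by
    intro t h0 h1
    have hpos : 0 < 1 / t - 1 := by
      rw [sub_pos, lt_div_iff₀ h0]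
      linarith
    refine ⟨-Real.log (1 / t - 1), ?_⟩
    rw [hLdef]
    dsimp only
    rw [neg_neg, Real.exp_log hpos]
    field_simp
    ring
  set Lψ : ↥D → ℝ := fun d => L ((ψ d : ℚ) : ℝ) with hLψdef
  have hLψmono : StrictMono Lψ := by
    intro d e hde
    exact hLmono (by exact_mod_cast ψ.strictMono hde)
  have hLψ01 : ∀ d, 0 < Lψ d ∧ Lψ d < 1 := fun d => hL01 _
  have hLdense : ∀ u v : ℝ, max u 0 < min v 1 → ∃ d : ↥D, u < Lψ d ∧ Lψ d < v := by
    intro u v huv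
    obtain ⟨a, ha1, ha2⟩ := exists_between huv
    obtain ⟨b, hb1, hb2⟩ := exists_between ha2
    have ha0 : 0 < a := lt_of_le_of_lt (le_max_right u 0) ha1
    have hb1' : b < 1 := lt_of_lt_of_le hb2 (min_le_right v 1)
    obtain ⟨ra, hra⟩ := hLsurj a ha0 (lt_trans hb1 hb1')
    obtain ⟨rb, hrb⟩ := hLsurj b (lt_trans ha0 hb1) hb1'
    have hrr : ra < rb := by
      have := hb1
      rw [← hra, ← hrb] at this
      exact hLmono.lt_iff_lt.mp this
    obtain ⟨q, hq1, hq2⟩ := exists_rat_btwn hrr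
    refine ⟨ψ.symm q, ?_, ?_⟩
    · have h1 : a < L q := by
        rw [← hra]
        exact hLmono hq1
      have h2 : u < a := lt_of_le_of_lt (le_max_left u 0) ha1
      have : Lψ (ψ.symm q) = L q := by
        rw [hLψdef]
        dsimp only
        rw [OrderIso.apply_symm_apply]
      rw [this]
      linarith
    · have h1 : L q < b := by
        rw [← hrb]
        exact hLmono hq2
      have h2 : b < v := lt_of_lt_of_le hb2 (min_le_left v 1)
      have : Lψ (ψ.symm q) = L q := by
        rw [hLψdef]
        dsimp only
        rw [OrderIso.apply_symm_apply]
      rw [this]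
      linarith
  -- the order-embedding into [0,1]
  set SF : X → Set ℝ := fun x => insert 0 (Lψ '' {d : ↥D | (d : X) ≤ x}) with hSFdef
  have hSFne : ∀ x, (SF x).Nonempty := fun x => ⟨0, Set.mem_insert _ _⟩
  have hSFbdd : ∀ x, BddAbove (SF x) := by
    intro x
    refine ⟨1, ?_⟩
    rintro y (rfl | ⟨d, -, rfl⟩)
    · norm_num
    · exact (hLψ01 d).2.le
  set F : X → ℝ := fun x => sSup (SF x) with hFdef
  have hF0 : ∀ x, 0 ≤ F x := fun x => le_csSup (hSFbdd x) (Set.mem_insert _ _)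
  have hF1 : ∀ x, F x ≤ 1 := by
    intro x
    refine csSup_le (hSFne x) ?_
    rintro y (rfl | ⟨d, -, rfl⟩)
    · norm_num
    · exact (hLψ01 d).2.le
  have hFd_le : ∀ (d : ↥D) (x : X), (d : X) ≤ x → Lψ d ≤ F x := fun d x hdx =>
    le_csSup (hSFbdd x) (Set.mem_insert_of_mem _ ⟨d, hdx, rfl⟩)
  have hFmono : StrictMono F := by
    intro x y hxy
    obtain ⟨d1, hd1, h1, h2⟩ := hDdense x y hxy
    obtain ⟨d2, hd2, h3, h4⟩ := hDdense d1 y h2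
    have key1 : F x ≤ Lψ ⟨d1, hd1⟩ := by
      refine csSup_le (hSFne x) ?_
      rintro t (rfl | ⟨d, hd, rfl⟩)
      · exact (hLψ01 _).1.le
      · have hdd : d < (⟨d1, hd1⟩ : ↥D) := Subtype.mk_lt_mk.mpr (lt_of_le_of_lt hd h1)
        exact (hLψmono hdd).le
    have key2 : Lψ ⟨d2, hd2⟩ ≤ F y := hFd_le ⟨d2, hd2⟩ y h4.le
    have key3 : Lψ (⟨d1, hd1⟩ : ↥D) < Lψ ⟨d2, hd2⟩ := hLψmono (Subtype.mk_lt_mk.mpr h3)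
    linarith
  have hFsurj : ∀ t : ℝ, 0 ≤ t → t ≤ 1 → ∃ x, F x = t := by
    intro t ht0 ht1
    set A : Set X := insert m (Subtype.val '' {d : ↥D | Lψ d ≤ t}) with hAdef
    have hAne : A.Nonempty := ⟨m, Set.mem_insert _ _⟩
    have hclc : IsCompact (closure A) := isClosed_closure.isCompact
    obtain ⟨x, hxcl, hxub⟩ := hclc.exists_isGreatest (hAne.mono subset_closure)
    have hlub : IsLUB A x := by
      constructor
      · intro a ha
        exact hxub (subset_closure ha)
      · intro y hy
        have hsub : closure A ⊆ Set.Iic y := closure_minimal (fun a ha => hy ha) isClosed_Iic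
        exact hsub hxcl
    refine ⟨x, ?_⟩
    have hub : ∀ d : ↥D, (d : X) ≤ x → Lψ d ≤ t := by
      intro d hdx
      by_contra hgt
      push_neg at hgt
      obtain ⟨e, he1, he2⟩ := hLdense t (Lψ d)
        (by rw [max_eq_left ht0, min_eq_left (hLψ01 d).2.le]; exact hgt)
      have hub' : x ≤ (e : X) := by
        apply hlub.2
        rintro a (rfl | ⟨d', hd', rfl⟩)
        · exact hm.2 (Set.mem_univ _)
        · have : d' < e := hLψmono.lt_iff_lt.mp (lt_of_le_of_lt hd' he1)
          exact (Subtype.coe_lt_coe.mpr this).le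
      have hde : e < d := hLψmono.lt_iff_lt.mp he2
      have : (d : X) ≤ (e : X) := le_trans hdx hub'
      exact absurd (Subtype.coe_lt_coe.mpr hde) (not_lt.mpr this)
    have hge : F x ≤ t := by
      refine csSup_le (hSFne x) ?_
      rintro s (rfl | ⟨d, hdx, rfl⟩)
      · exact ht0
      · exact hub d hdx
    have hle' : t ≤ F x := by
      by_contra hlt
      push_neg at hlt
      have hFx0 : 0 ≤ F x := hF0 x
      obtain ⟨e, he1, he2⟩ := hLdense (F x) t
        (by rw [max_eq_left hFx0, min_eq_left ht1]; exact hlt)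
      have heA : (e : X) ∈ A := Set.mem_insert_of_mem _ ⟨e, he2.le, rfl⟩
      have : (e : X) ≤ x := hlub.1 heA
      exact absurd (hFd_le e x this) (not_le.mpr he1)
    linarith
  set F' : X → ↥(Set.Icc (0:ℝ) 1) := fun x => ⟨F x, hF0 x, hF1 x⟩ with hF'def
  have hF'mono : StrictMono F' := by
    intro x y h
    rw [hF'def]
    exact Subtype.mk_lt_mk.mpr (hFmono h)
  have hF'surj : Function.Surjective F' := by
    rintro ⟨t, ht0, ht1⟩
    obtain ⟨x, hx⟩ := hFsurj t ht0 ht1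
    exact ⟨x, Subtype.ext hx⟩
  exact ⟨(StrictMono.orderIsoOfSurjective F' hF'mono hF'surj).toHomeomorph⟩

/-- In `[0,1]²`, every pair `(s,t)` with `s < t` is interior to a subcontinuum missing
the diagonal. -/
theorem icc_witness {s t : ↥(Set.Icc (0:ℝ) 1)} (hst : (s : ℝ) < (t : ℝ)) :
    ∃ W : Set (↥(Set.Icc (0:ℝ) 1) × ↥(Set.Icc (0:ℝ) 1)),
      IsCompact W ∧ IsConnected W ∧ (s, t) ∈ interior W ∧ ∀ q ∈ W, (q.1 : ℝ) < (q.2 : ℝ) := by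
  obtain ⟨c, hc1, hc2⟩ := exists_between hst
  obtain ⟨c', hc3, hc4⟩ := exists_between hc2
  have h01 : (0:ℝ) ≤ 1 := by norm_num
  have hcmem : c ∈ Set.Icc (0:ℝ) 1 := ⟨s.2.1.trans hc1.le, (hc2.trans_le t.2.2).le⟩
  have hc'mem : c' ∈ Set.Icc (0:ℝ) 1 := ⟨s.2.1.trans (hc1.trans hc3).le, (hc4.trans_le t.2.2).le⟩
  set W : Set (↥(Set.Icc (0:ℝ) 1) × ↥(Set.Icc (0:ℝ) 1)) :=
    {q | (q.1 : ℝ) ≤ c ∧ c' ≤ (q.2 : ℝ)} with hWdef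
  have hcont1 : Continuous fun q : ↥(Set.Icc (0:ℝ) 1) × ↥(Set.Icc (0:ℝ) 1) => (q.1 : ℝ) :=
    continuous_subtype_val.comp continuous_fst
  have hcont2 : Continuous fun q : ↥(Set.Icc (0:ℝ) 1) × ↥(Set.Icc (0:ℝ) 1) => (q.2 : ℝ) :=
    continuous_subtype_val.comp continuous_snd
  have hWclosed : IsClosed W := by
    have h1 : IsClosed {q : ↥(Set.Icc (0:ℝ) 1) × ↥(Set.Icc (0:ℝ) 1) | (q.1 : ℝ) ≤ c} :=
      isClosed_le hcont1 continuous_const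
    have h2 : IsClosed {q : ↥(Set.Icc (0:ℝ) 1) × ↥(Set.Icc (0:ℝ) 1) | c' ≤ (q.2 : ℝ)} :=
      isClosed_le continuous_const hcont2
    exact h1.inter h2
  refine ⟨W, hWclosed.isCompact, ?_, ?_, ?_⟩
  · -- connected: image of a product of intervals
    set m : ℝ × ℝ → ↥(Set.Icc (0:ℝ) 1) × ↥(Set.Icc (0:ℝ) 1) :=
      fun r => (Set.projIcc 0 1 h01 r.1, Set.projIcc 0 1 h01 r.2) with hmdef
    have hmcont : Continuous m :=
      ((continuous_projIcc.comp continuous_fst).prodMk (continuous_projIcc.comp continuous_snd))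
    have himg : W = m '' (Set.Icc 0 c ×ˢ Set.Icc c' 1) := by
      apply Set.Subset.antisymm
      · rintro ⟨q1, q2⟩ ⟨hq1, hq2⟩
        refine ⟨((q1 : ℝ), (q2 : ℝ)), ⟨⟨q1.2.1, hq1⟩, ⟨hq2, q2.2.2⟩⟩, ?_⟩
        rw [hmdef]
        dsimp only
        rw [Set.projIcc_of_mem h01 q1.2, Set.projIcc_of_mem h01 q2.2]
      · rintro q ⟨⟨r1, r2⟩, ⟨⟨hr1a, hr1b⟩, ⟨hr2a, hr2b⟩⟩, rfl⟩
        have hr1m : r1 ∈ Set.Icc (0:ℝ) 1 := ⟨hr1a, hr1b.trans hcmem.2⟩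
        have hr2m : r2 ∈ Set.Icc (0:ℝ) 1 := ⟨hc'mem.1.trans hr2a, hr2b⟩
        constructor
        · show ((Set.projIcc 0 1 h01 r1 : ↥(Set.Icc (0:ℝ) 1)) : ℝ) ≤ c
          rw [Set.projIcc_of_mem h01 hr1m]
          exact hr1b
        · show c' ≤ ((Set.projIcc 0 1 h01 r2 : ↥(Set.Icc (0:ℝ) 1)) : ℝ)
          rw [Set.projIcc_of_mem h01 hr2m]
          exact hr2a
    rw [himg]
    refine IsConnected.image ?_ m hmcont.continuousOn
    exact (isConnected_Icc hcmem.1).prod (isConnected_Icc hc'mem.2)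
  · -- interior
    have hVopen : IsOpen {q : ↥(Set.Icc (0:ℝ) 1) × ↥(Set.Icc (0:ℝ) 1) |
        (q.1 : ℝ) < c ∧ c' < (q.2 : ℝ)} := by
      have h1 := isOpen_lt hcont1 (continuous_const : Continuous fun _ => c)
      have h2 := isOpen_lt (continuous_const : Continuous fun _ => c') hcont2
      exact h1.inter h2
    have hVsub : {q : ↥(Set.Icc (0:ℝ) 1) × ↥(Set.Icc (0:ℝ) 1) |
        (q.1 : ℝ) < c ∧ c' < (q.2 : ℝ)} ⊆ W := fun q hq => ⟨hq.1.le, hq.2.le⟩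
    exact interior_maximal hVsub hVopen ⟨hc1, hc4⟩
  · rintro ⟨q1, q2⟩ ⟨hq1, hq2⟩
    exact lt_of_le_of_lt hq1 (lt_of_lt_of_le hc3 hq2)

end Stmt18Aux

/-- Let `X` be a nondegenerate chainable continuum. Then `T_{X²}(Δ_X) = Δ_X` iff `X`
is an arc, i.e. `X` is homeomorphic to `[0,1]`. -/
theorem stmt18 {X : Type*} [MetricSpace X] [CompactSpace X] [ConnectedSpace X]
    (hnd : ∃ x y : X, x ≠ y) (hch : IsChainable X) :
    jonesT {p : X × X | p.1 = p.2} = {p : X × X | p.1 = p.2} ↔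
      Nonempty (X ≃ₜ (Set.Icc (0 : ℝ) 1)) := by
  constructor
  · intro hTeq
    refine Stmt18Aux.arc_of_T hnd hch ?_
    intro p hp
    have hp' : p ∉ jonesT {p : X × X | p.1 = p.2} := by
      rw [hTeq]; exact hp
    simp only [jonesT, Set.mem_compl_iff, Set.mem_setOf_eq, not_not] at hp'
    obtain ⟨W, ⟨hWc, hWconn⟩, hWint, hWsub⟩ := hp'
    exact ⟨W, hWc, hWconn.isPreconnected, fun q hq => hWsub hq, hWint⟩
  · rintro ⟨h⟩
    ext p
    simp only [jonesT, Set.mem_compl_iff, Set.mem_setOf_eq]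
    constructor
    · intro hp
      by_contra hne
      apply hp
      have hab : h p.1 ≠ h p.2 := fun hc => hne (h.injective hc)
      have hab' : (h p.1 : ℝ) ≠ (h p.2 : ℝ) := fun hc => hab (Subtype.ext hc)
      -- a witness in [0,1]² around (h p.1, h p.2)
      have hwit : ∃ W : Set (↥(Set.Icc (0:ℝ) 1) × ↥(Set.Icc (0:ℝ) 1)),
          IsCompact W ∧ IsConnected W ∧ (h p.1, h p.2) ∈ interior W ∧
            ∀ q ∈ W, (q.1 : ℝ) ≠ (q.2 : ℝ) := by
        rcases lt_or_gt_of_ne hab' with hlt | hgt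
        · obtain ⟨W, h1, h2, h3, h4⟩ := Stmt18Aux.icc_witness hlt
          exact ⟨W, h1, h2, h3, fun q hq => (h4 q hq).ne⟩
        · obtain ⟨W, h1, h2, h3, h4⟩ := Stmt18Aux.icc_witness hgt
          refine ⟨Prod.swap '' W, h1.image continuous_swap,
            h2.image _ continuous_swap.continuousOn, ?_, ?_⟩
          · have hsw := (Homeomorph.prodComm (↥(Set.Icc (0:ℝ) 1)) (↥(Set.Icc (0:ℝ) 1)))
            have : (Homeomorph.prodComm _ _) '' interior W = interior (Prod.swap '' W) :=
              Homeomorph.image_interior _ W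
            rw [← this]
            exact ⟨(h p.2, h p.1), h3, rfl⟩
          · rintro q ⟨w, hw, rfl⟩
            exact (h4 w hw).ne'
      obtain ⟨W, hWc, hWconn, hWint, hWd⟩ := hwit
      set G : ↥(Set.Icc (0:ℝ) 1) × ↥(Set.Icc (0:ℝ) 1) ≃ₜ X × X :=
        (h.symm).prodCongr (h.symm) with hGdef
      refine ⟨G '' W, ⟨hWc.image G.continuous, hWconn.image _ G.continuous.continuousOn⟩, ?_, ?_⟩
      · have : G '' interior W = interior (G '' W) := Homeomorph.image_interior _ W
        rw [← this]
        refine ⟨(h p.1, h p.2), hWint, ?_⟩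
        show (h.symm (h p.1), h.symm (h p.2)) = p
        rw [Homeomorph.symm_apply_apply, Homeomorph.symm_apply_apply]
      · rintro q ⟨w, hw, rfl⟩
        show ¬ _ ∈ {p : X × X | p.1 = p.2}
        simp only [Set.mem_setOf_eq]
        show ¬ h.symm w.1 = h.symm w.2
        intro hc
        exact hWd w hw (congrArg (fun z => ((z : ↥(Set.Icc (0:ℝ) 1)) : ℝ)) (h.symm.injective hc))
    · intro hp
      rintro ⟨W, hW, hpint, hWsub⟩
      exact hWsub (interior_subset hpint) hp
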